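/- Assume ∫_{(0,1]} z^{α/d} λ(dz) < ∞, and suppose there are β ∈ [0, α/d) and a slowly varying function l at infinity such that λ̄(r) = l(r)/r^{β} for all r ≥ 1. Then τ̄(r) ∼ (α/(α − dβ)) · t^{1 − dβ/α} · λ̄(r) as r → ∞. -/

import Mathlib

set_option maxHeartbeats 1000000

open MeasureTheory Set Filter Topology
open scoped ENNReal NNReal

lemma lint_rpow {a b q : ℝ} (ha : 0 ≤ a) (hab : a ≤ b) (hq : -1 < q) :
    ∫⁻ s in Set.Ioc a b, ENNReal.ofReal (s ^ q) =
      ENNReal.ofReal ((b ^ (q+1) - a ^ (q+1)) / (q+1)) := by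
  have hint : IntervalIntegrable (fun s : ℝ => s ^ q) volume a b :=
    intervalIntegral.intervalIntegrable_rpow' hq
  have hIoc : MeasureTheory.IntegrableOn (fun s : ℝ => s ^ q) (Set.Ioc a b) :=
    (intervalIntegrable_iff_integrableOn_Ioc_of_le hab).1 hint
  have hnn : 0 ≤ᵐ[volume.restrict (Set.Ioc a b)] fun s : ℝ => s ^ q := by
    rw [EventuallyLE, ae_restrict_iff' measurableSet_Ioc]
    exact ae_of_all _ fun s hs => Real.rpow_nonneg (le_of_lt (lt_of_le_of_lt ha hs.1)) q
  rw [← MeasureTheory.ofReal_integral_eq_lintegral_ofReal hIoc hnn]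
  congr 1
  rw [← intervalIntegral.integral_of_le hab]
  exact integral_rpow (Or.inl hq)

lemma maxb {s tM pd : ℝ} (hs : 0 < s) (hst : s ≤ tM) (h1 : 1 ≤ tM) (hpd : 0 ≤ pd) :
    max (s ^ pd) (s ^ (-pd)) ≤ tM ^ (2*pd) * s ^ (-pd) := by
  have h2 : (0:ℝ) ≤ s ^ (-pd) := Real.rpow_nonneg hs.le _
  refine max_le ?_ (le_mul_of_one_le_left h2 (Real.one_le_rpow h1 (by positivity)))
  have : s ^ pd = s ^ (2*pd) * s ^ (-pd) := by
    rw [← Real.rpow_add hs]; ring_nf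
  rw [this]
  exact mul_le_mul_of_nonneg_right (Real.rpow_le_rpow hs.le hst (by positivity)) h2

lemma minb {s tM pd : ℝ} (hs : 0 < s) (hst : s ≤ tM) (h1 : 1 ≤ tM) (hpd : 0 ≤ pd) :
    tM ^ (-(2*pd)) * s ^ pd ≤ min (s ^ pd) (s ^ (-pd)) := by
  have htM : (0:ℝ) < tM := lt_of_lt_of_le one_pos h1
  have h2 : (0:ℝ) ≤ s ^ pd := Real.rpow_nonneg hs.le _
  refine le_min (mul_le_of_le_one_left h2 (Real.rpow_le_one_of_one_le_of_nonpos h1 (neg_nonpos.2 (by positivity)))) ?_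
  have hs2 : s ^ pd = s ^ (2*pd) * s ^ (-pd) := by rw [← Real.rpow_add hs]; ring_nf
  rw [hs2, ← mul_assoc]
  have : tM ^ (-(2*pd)) * s ^ (2*pd) ≤ 1 := by
    have h3 : s ^ (2*pd) ≤ tM ^ (2*pd) := Real.rpow_le_rpow hs.le hst (by positivity)
    have h4 : tM ^ (-(2*pd)) * tM ^ (2*pd) = 1 := by
      rw [← Real.rpow_add htM]; simp
    calc tM ^ (-(2*pd)) * s ^ (2*pd) ≤ tM ^ (-(2*pd)) * tM ^ (2*pd) :=
          mul_le_mul_of_nonneg_left h3 (Real.rpow_nonneg htM.le _)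
      _ = 1 := h4
  exact mul_le_of_le_one_left (Real.rpow_nonneg hs.le _) this

/-- `tauBar d α t lam r = τ̄(r)`, where
`τ(B) = (Leb ⊗ λ)({(s,z) ∈ (0,t] × (0,∞) : z·s^{-d/α} ∈ B})` and `τ̄(r) = τ((r,∞))`. -/
noncomputable def tauBar (d : ℕ) (α t : ℝ) (lam : MeasureTheory.Measure ℝ) (r : ℝ) : ℝ≥0∞ :=
  ((MeasureTheory.volume.restrict (Set.Ioc (0:ℝ) t)).prod (lam.restrict (Set.Ioi (0:ℝ))))
    {p : ℝ × ℝ | r < p.2 * p.1 ^ (-((d : ℝ) / α))}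

lemma tauBar_eq (d : ℕ) (α t : ℝ) (lam : Measure ℝ) [SigmaFinite lam] (r : ℝ) (hr : 0 ≤ r) :
    tauBar d α t lam r = ∫⁻ s in Set.Ioc (0:ℝ) t, lam (Set.Ioi (r * s ^ ((d:ℝ)/α))) := by
  have hmeas : MeasurableSet {p : ℝ × ℝ | r < p.2 * p.1 ^ (-((d : ℝ) / α))} := by
    apply measurableSet_lt measurable_const
    exact measurable_snd.mul (measurable_fst.pow measurable_const)
  rw [tauBar, Measure.prod_apply hmeas]
  refine setLIntegral_congr_fun measurableSet_Ioc (fun s hs => ?_)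
  have hs0 : 0 < s := hs.1
  have hsp : 0 < s ^ ((d:ℝ)/α) := Real.rpow_pos_of_pos hs0 _
  have hset : (Prod.mk s ⁻¹' {p : ℝ × ℝ | r < p.2 * p.1 ^ (-((d : ℝ) / α))}) =
      Set.Ioi (r * s ^ ((d:ℝ)/α)) := by
    ext z
    simp only [Set.mem_preimage, Set.mem_setOf_eq, Set.mem_Ioi]
    rw [Real.rpow_neg hs0.le, ← div_eq_mul_inv, lt_div_iff₀ hsp]
  rw [hset, Measure.restrict_apply measurableSet_Ioi]
  congr 1
  exact Set.inter_eq_left.2 (Set.Ioi_subset_Ioi (by positivity))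

lemma small_part_eq (lam : Measure ℝ) [SigmaFinite lam] (p' : ℝ) (r σ' : ℝ) (hr : 0 ≤ r) :
    ∫⁻ s in Set.Ioc (0:ℝ) σ', lam (Set.Ioi (r * s ^ p')) =
      ∫⁻ z in Set.Ioi (0:ℝ), volume ({s : ℝ | r * s ^ p' < z} ∩ Set.Ioc (0:ℝ) σ') ∂lam := by
  have hmeas : MeasurableSet {q : ℝ × ℝ | r * q.1 ^ p' < q.2} := by
    apply measurableSet_lt
    · exact (measurable_fst.pow measurable_const).const_mul r
    · exact measurable_snd
  have h1 : ((volume.restrict (Set.Ioc (0:ℝ) σ')).prod (lam.restrict (Set.Ioi (0:ℝ))))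
      {q : ℝ × ℝ | r * q.1 ^ p' < q.2} =
      ∫⁻ s in Set.Ioc (0:ℝ) σ', lam (Set.Ioi (r * s ^ p')) := by
    rw [Measure.prod_apply hmeas]
    refine setLIntegral_congr_fun measurableSet_Ioc (fun s hs => ?_)
    have : (Prod.mk s ⁻¹' {q : ℝ × ℝ | r * q.1 ^ p' < q.2}) = Set.Ioi (r * s ^ p') := rfl
    rw [this, Measure.restrict_apply measurableSet_Ioi]
    congr 1
    refine Set.inter_eq_left.2 (Set.Ioi_subset_Ioi ?_)
    have := Real.rpow_pos_of_pos hs.1 p'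
    positivity
  have h2 : ((volume.restrict (Set.Ioc (0:ℝ) σ')).prod (lam.restrict (Set.Ioi (0:ℝ))))
      {q : ℝ × ℝ | r * q.1 ^ p' < q.2} =
      ∫⁻ z in Set.Ioi (0:ℝ), volume ({s : ℝ | r * s ^ p' < z} ∩ Set.Ioc (0:ℝ) σ') ∂lam := by
    rw [Measure.prod_apply_symm hmeas]
    refine lintegral_congr fun z => ?_
    have : ((fun s => (s, z)) ⁻¹' {q : ℝ × ℝ | r * q.1 ^ p' < q.2}) = {s : ℝ | r * s ^ p' < z} := rfl
    rw [this, Measure.restrict_apply]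
    exact (measurableSet_lt ((measurable_id.pow measurable_const).const_mul r) measurable_const)
  rw [← h1, h2]

lemma potter_aux (h : ℝ → ℝ)
    (hmono : ∀ x y : ℝ, 1 ≤ x → x ≤ y → h y ≤ h x)
    (hpos : ∀ x : ℝ, 1 ≤ x → 0 < h x)
    (β : ℝ) (hβ0 : 0 ≤ β)
    (hlim : ∀ c : ℝ, 0 < c → Tendsto (fun r => h (c * r) / h r) atTop (nhds (c ^ (-β))))
    (δ : ℝ) (hδ : 0 < δ) :
    ∃ R : ℝ, 1 ≤ R ∧ ∀ r, R ≤ r → ∀ c : ℝ, 0 < c → R ≤ c * r →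
      h (c * r) ≤ Real.exp δ * (c ^ (-β) * max (c ^ δ) (c ^ (-δ))) * h r ∧
      Real.exp (-δ) * (c ^ (-β) * min (c ^ δ) (c ^ (-δ))) * h r ≤ h (c * r) := by
  classical
  -- choose grid size
  obtain ⟨N, hN0, hNβ⟩ : ∃ N : ℕ, ((0:ℝ) < N ∧ β / N ≤ δ / 2) := by
    refine ⟨⌈2*β/δ⌉₊ + 1, by positivity, ?_⟩
    have hN0 : (0:ℝ) < (⌈2*β/δ⌉₊ + 1 : ℕ) := by positivity
    have h1 : 2*β/δ ≤ ((⌈2*β/δ⌉₊ + 1 : ℕ):ℝ) := le_trans (Nat.le_ceil _)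
      (by exact_mod_cast Nat.le_succ _)
    rw [div_le_div_iff₀ hN0 (by norm_num)]
    have := (div_le_iff₀ hδ).1 h1
    nlinarith
  -- eventual grid bounds
  have hgrid : ∀ᶠ r in atTop, (1:ℝ) ≤ r ∧ ∀ i ∈ Finset.range (N+2),
      (h (Real.exp (i / N) * r) ≤ Real.exp (δ/2) * Real.exp (i/N) ^ (-β) * h r ∧
       Real.exp (-(δ/2)) * Real.exp (i/N) ^ (-β) * h r ≤ h (Real.exp (i/N) * r)) := by
    refine (eventually_ge_atTop 1).and ?_
    rw [eventually_all_finset]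
    intro i _
    have hc : (0:ℝ) < Real.exp (i/N) := Real.exp_pos _
    have hcb : (0:ℝ) < Real.exp (i/N) ^ (-β) := Real.rpow_pos_of_pos hc _
    have H := hlim _ hc
    have hub := H.eventually_lt_const
      (show Real.exp (i/N) ^ (-β) < Real.exp (δ/2) * Real.exp (i/N) ^ (-β) from
        lt_mul_of_one_lt_left hcb (Real.one_lt_exp_iff.2 (by linarith)))
    have hlb := H.eventually_const_lt
      (show Real.exp (-(δ/2)) * Real.exp (i/N) ^ (-β) < Real.exp (i/N) ^ (-β) from
        mul_lt_of_lt_one_left hcb (Real.exp_lt_one_iff.2 (by linarith)))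
    filter_upwards [hub, hlb, eventually_ge_atTop (1:ℝ)] with r h1 h2 h3
    have hr0 : 0 < h r := hpos r h3
    exact ⟨le_of_lt ((div_lt_iff₀ hr0).1 h1), le_of_lt ((lt_div_iff₀ hr0).1 h2)⟩
  obtain ⟨R0, hR0⟩ := eventually_atTop.1 hgrid
  set R : ℝ := max R0 1 with hRdef
  have hR1 : (1:ℝ) ≤ R := le_max_right _ _
  have hRapp : ∀ r, R ≤ r → ((1:ℝ) ≤ r ∧ ∀ i ∈ Finset.range (N+2),
      (h (Real.exp (i / N) * r) ≤ Real.exp (δ/2) * Real.exp (i/N) ^ (-β) * h r ∧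
       Real.exp (-(δ/2)) * Real.exp (i/N) ^ (-β) * h r ≤ h (Real.exp (i/N) * r))) :=
    fun r hr => hR0 r (le_trans (le_max_left _ _) hr)
  -- Dini step
  have dini : ∀ r, R ≤ r → ∀ c, 1 ≤ c → c ≤ Real.exp 1 →
      h (c*r) ≤ Real.exp δ * c ^ (-β) * h r ∧ Real.exp (-δ) * c ^ (-β) * h r ≤ h (c*r) := by
    intro r hr c hc1 hce
    obtain ⟨hr1, hkey⟩ := hRapp r hr
    have hr0 : (0:ℝ) < r := lt_of_lt_of_le one_pos hr1
    have hc0 : (0:ℝ) < c := lt_of_lt_of_le one_pos hc1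
    have hhr0 : (0:ℝ) ≤ h r := (hpos r hr1).le
    have hlogc0 : 0 ≤ Real.log c := Real.log_nonneg hc1
    have hlogc1 : Real.log c ≤ 1 := by
      have := Real.log_le_log hc0 hce
      rwa [Real.log_exp] at this
    set i : ℕ := ⌊(N:ℝ) * Real.log c⌋₊ with hidef
    have hi_le : (i:ℝ) ≤ (N:ℝ) * Real.log c := Nat.floor_le (by positivity)
    have hi_lt : (N:ℝ) * Real.log c < i + 1 := Nat.lt_floor_add_one _
    have hiN : (i:ℝ) ≤ (N:ℝ) := le_trans hi_le (by nlinarith)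
    have hiNmem : i ∈ Finset.range (N+2) := by
      have : i ≤ N := by exact_mod_cast hiN
      exact Finset.mem_range.2 (by omega)
    have hiN1mem : i + 1 ∈ Finset.range (N+2) := by
      have : i ≤ N := by exact_mod_cast hiN
      exact Finset.mem_range.2 (by omega)
    have key1 := hkey i hiNmem
    have key2 := hkey (i+1) hiN1mem
    push_cast at key2
    have hexp_le_c : Real.exp (i/N) ≤ c := by
      have : (i:ℝ)/N ≤ Real.log c := by rw [div_le_iff₀ hN0]; nlinarith
      calc Real.exp (i/N) ≤ Real.exp (Real.log c) := Real.exp_le_exp.2 this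
        _ = c := Real.exp_log hc0
    have hc_le_exp : c ≤ Real.exp ((i+1)/N) := by
      have : Real.log c ≤ ((i:ℝ)+1)/N := by rw [le_div_iff₀ hN0]; nlinarith
      calc c = Real.exp (Real.log c) := (Real.exp_log hc0).symm
        _ ≤ Real.exp ((i+1)/N) := Real.exp_le_exp.2 this
    constructor
    · -- upper bound
      have m1 : h (c*r) ≤ h (Real.exp (i/N) * r) := by
        refine hmono _ _ ?_ (mul_le_mul_of_nonneg_right hexp_le_c hr0.le)
        have : (1:ℝ) ≤ Real.exp (i/N) := Real.one_le_exp (by positivity)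
        nlinarith
      have m2 : Real.exp (i/N) ^ (-β) ≤ c ^ (-β) * Real.exp (δ/2) := by
        rw [Real.rpow_def_of_pos (Real.exp_pos _), Real.log_exp,
          Real.rpow_def_of_pos hc0, ← Real.exp_add]
        apply Real.exp_le_exp.2
        have hd : Real.log c - (i:ℝ)/N ≤ 1/N := by
          rw [sub_le_iff_le_add, ← add_div, le_div_iff₀ hN0]; nlinarith
        have hNd : β * (1/N) ≤ δ/2 := by rw [mul_one_div]; exact hNβ
        have key := le_trans (mul_le_mul_of_nonneg_left hd hβ0) hNd
        linarith
      calc h (c*r) ≤ h (Real.exp (i/N) * r) := m1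
        _ ≤ Real.exp (δ/2) * Real.exp (i/N) ^ (-β) * h r := key1.1
        _ ≤ Real.exp (δ/2) * (c ^ (-β) * Real.exp (δ/2)) * h r :=
            mul_le_mul_of_nonneg_right
              (mul_le_mul_of_nonneg_left m2 (Real.exp_pos _).le) hhr0
        _ = Real.exp δ * c ^ (-β) * h r := by
            rw [show (δ:ℝ) = δ/2 + δ/2 by ring, Real.exp_add]; ring
    · -- lower bound
      have m1 : h (Real.exp ((i+1)/N) * r) ≤ h (c*r) := by
        refine hmono _ _ ?_ (mul_le_mul_of_nonneg_right hc_le_exp hr0.le)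
        nlinarith
      have m2 : c ^ (-β) * Real.exp (-(δ/2)) ≤ Real.exp ((i+1)/N) ^ (-β) := by
        rw [Real.rpow_def_of_pos (Real.exp_pos _), Real.log_exp,
          Real.rpow_def_of_pos hc0, ← Real.exp_add]
        apply Real.exp_le_exp.2
        have hNN : (1/(N:ℝ))*(N:ℝ) = 1 := by field_simp
        have hd : ((i:ℝ)+1)/N - Real.log c ≤ 1/N := by
          rw [sub_le_iff_le_add, div_le_iff₀ hN0]
          nlinarith [hi_le, hNN]
        have hNd : β * (1/N) ≤ δ/2 := by rw [mul_one_div]; exact hNβ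
        have key := le_trans (mul_le_mul_of_nonneg_left hd hβ0) hNd
        linarith
      calc Real.exp (-δ) * c ^ (-β) * h r
          = Real.exp (-(δ/2)) * (c ^ (-β) * Real.exp (-(δ/2))) * h r := by
            rw [show (-δ:ℝ) = -(δ/2) + -(δ/2) by ring, Real.exp_add]; ring
        _ ≤ Real.exp (-(δ/2)) * Real.exp ((i+1)/N) ^ (-β) * h r :=
            mul_le_mul_of_nonneg_right
              (mul_le_mul_of_nonneg_left m2 (Real.exp_pos _).le) hhr0
        _ ≤ h (Real.exp ((i+1)/N) * r) := key2.2
        _ ≤ h (c*r) := m1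
  -- induction on n
  have ind : ∀ n : ℕ, ∀ r, R ≤ r → ∀ c, 1 ≤ c → c ≤ Real.exp ((n:ℝ)+1) →
      h (c*r) ≤ Real.exp (((n:ℝ)+1)*δ) * c ^ (-β) * h r ∧
      Real.exp (-(((n:ℝ)+1)*δ)) * c ^ (-β) * h r ≤ h (c*r) := by
    intro n
    induction n with
    | zero =>
      intro r hr c hc1 hc2
      have := dini r hr c hc1 (by simpa using hc2)
      simpa using this
    | succ n IH =>
      intro r hr c hc1 hcb
      have hr1 : (1:ℝ) ≤ r := le_trans hR1 hr
      have hr0 : (0:ℝ) < r := lt_of_lt_of_le one_pos hr1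
      have hhr0 : (0:ℝ) ≤ h r := (hpos r hr1).le
      have hc0 : (0:ℝ) < c := lt_of_lt_of_le one_pos hc1
      have hcb0 : (0:ℝ) ≤ c ^ (-β) := Real.rpow_nonneg hc0.le _
      by_cases hcn : c ≤ Real.exp ((n:ℝ)+1)
      · obtain ⟨u1, u2⟩ := IH r hr c hc1 hcn
        constructor
        · refine le_trans u1 ?_
          have hE : Real.exp (((n:ℝ)+1)*δ) ≤ Real.exp (((((n:ℕ)+1:ℕ):ℝ)+1)*δ) := by
            apply Real.exp_le_exp.2; push_cast; nlinarith
          exact mul_le_mul_of_nonneg_right (mul_le_mul_of_nonneg_right hE hcb0) hhr0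
        · refine le_trans ?_ u2
          have hE : Real.exp (-(((((n:ℕ)+1:ℕ):ℝ)+1)*δ)) ≤ Real.exp (-(((n:ℝ)+1)*δ)) := by
            apply Real.exp_le_exp.2; push_cast; nlinarith
          exact mul_le_mul_of_nonneg_right (mul_le_mul_of_nonneg_right hE hcb0) hhr0
      · push_neg at hcn
        set E : ℝ := Real.exp ((n:ℝ)+1) with hEdef
        have hE0 : (0:ℝ) < E := Real.exp_pos _
        have hE1 : (1:ℝ) ≤ E := Real.one_le_exp (by positivity)
        set c' : ℝ := c / E with hc'def
        have hc'0 : (0:ℝ) < c' := div_pos hc0 hE0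
        have hc'1 : (1:ℝ) ≤ c' := by
          rw [hc'def, le_div_iff₀ hE0]; nlinarith
        have hc'e : c' ≤ Real.exp 1 := by
          rw [hc'def, div_le_iff₀ hE0, ← Real.exp_add]
          have : c ≤ Real.exp ((((n:ℕ)+1:ℕ):ℝ)+1) := hcb
          push_cast at this ⊢
          convert this using 2
          · rfl
          · ring
        have hbase : R ≤ E * r := le_trans hr (le_mul_of_one_le_left hr0.le hE1)
        have hsplit : c * r = c' * (E * r) := by
          rw [hc'def]; field_simp
        obtain ⟨d1, d2⟩ := dini (E * r) hbase c' hc'1 hc'e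
        obtain ⟨e1, e2⟩ := IH r hr E hE1 (le_refl _)
        have hcc : c' * E = c := by rw [hc'def]; field_simp
        have hrpow : c' ^ (-β) * E ^ (-β) = c ^ (-β) := by
          rw [← Real.mul_rpow hc'0.le hE0.le, hcc]
        have hc'b0 : (0:ℝ) ≤ c' ^ (-β) := Real.rpow_nonneg hc'0.le _
        have hEb0 : (0:ℝ) ≤ E ^ (-β) := Real.rpow_nonneg hE0.le _
        have hexpsum : Real.exp δ * Real.exp (((n:ℝ)+1)*δ) = Real.exp (((((n:ℕ)+1:ℕ):ℝ)+1)*δ) := by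
          rw [← Real.exp_add]; congr 1; push_cast; ring
        have hexpsum' : Real.exp (-δ) * Real.exp (-(((n:ℝ)+1)*δ)) =
            Real.exp (-(((((n:ℕ)+1:ℕ):ℝ)+1)*δ)) := by
          rw [← Real.exp_add]; congr 1; push_cast; ring
        constructor
        · rw [hsplit]
          calc h (c' * (E * r)) ≤ Real.exp δ * c' ^ (-β) * h (E * r) := d1
            _ ≤ Real.exp δ * c' ^ (-β) * (Real.exp (((n:ℝ)+1)*δ) * E ^ (-β) * h r) := by
                have := Real.exp_pos δ
                nlinarith [mul_nonneg (Real.exp_pos δ).le hc'b0]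
            _ = (Real.exp δ * Real.exp (((n:ℝ)+1)*δ)) * (c' ^ (-β) * E ^ (-β)) * h r := by ring
            _ = Real.exp (((((n:ℕ)+1:ℕ):ℝ)+1)*δ) * c ^ (-β) * h r := by rw [hexpsum, hrpow]
        · rw [hsplit]
          calc Real.exp (-(((((n:ℕ)+1:ℕ):ℝ)+1)*δ)) * c ^ (-β) * h r
              = Real.exp (-δ) * c' ^ (-β) * (Real.exp (-(((n:ℝ)+1)*δ)) * E ^ (-β) * h r) := by
                rw [← hexpsum', ← hrpow]; ring
            _ ≤ Real.exp (-δ) * c' ^ (-β) * h (E * r) := by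
                have := e2
                nlinarith [mul_nonneg (Real.exp_pos (-δ)).le hc'b0]
            _ ≤ h (c' * (E * r)) := d2
  -- main1 : the case c ≥ 1
  have main1 : ∀ r, R ≤ r → ∀ c, 1 ≤ c →
      (h (c*r) ≤ Real.exp δ * (c ^ (-β) * c ^ δ) * h r ∧
       Real.exp (-δ) * (c ^ (-β) * c ^ (-δ)) * h r ≤ h (c*r)) := by
    intro r hr c hc1
    have hr1 : (1:ℝ) ≤ r := le_trans hR1 hr
    have hhr0 : (0:ℝ) ≤ h r := (hpos r hr1).le
    have hc0 : (0:ℝ) < c := lt_of_lt_of_le one_pos hc1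
    have hcb0 : (0:ℝ) ≤ c ^ (-β) := Real.rpow_nonneg hc0.le _
    have hlog0 : 0 ≤ Real.log c := Real.log_nonneg hc1
    set n : ℕ := ⌊Real.log c⌋₊ with hndef
    have hn_le : (n:ℝ) ≤ Real.log c := Nat.floor_le hlog0
    have hn_lt : Real.log c < n + 1 := Nat.lt_floor_add_one _
    have hcE : c ≤ Real.exp ((n:ℝ)+1) := by
      calc c = Real.exp (Real.log c) := (Real.exp_log hc0).symm
        _ ≤ Real.exp ((n:ℝ)+1) := Real.exp_le_exp.2 hn_lt.le
    obtain ⟨u1, u2⟩ := ind n r hr c hc1 hcE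
    have hcδ : c ^ δ = Real.exp (Real.log c * δ) := by
      rw [Real.rpow_def_of_pos hc0]
    have hexp1 : Real.exp (((n:ℝ)+1)*δ) ≤ Real.exp δ * c ^ δ := by
      rw [hcδ, ← Real.exp_add]
      apply Real.exp_le_exp.2
      nlinarith
    have hexp2 : Real.exp (-δ) * c ^ (-δ) ≤ Real.exp (-(((n:ℝ)+1)*δ)) := by
      rw [Real.rpow_def_of_pos hc0, ← Real.exp_add]
      apply Real.exp_le_exp.2
      nlinarith
    constructor
    · calc h (c*r) ≤ Real.exp (((n:ℝ)+1)*δ) * c ^ (-β) * h r := u1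
        _ ≤ (Real.exp δ * c ^ δ) * c ^ (-β) * h r :=
            mul_le_mul_of_nonneg_right (mul_le_mul_of_nonneg_right hexp1 hcb0) hhr0
        _ = Real.exp δ * (c ^ (-β) * c ^ δ) * h r := by ring
    · calc Real.exp (-δ) * (c ^ (-β) * c ^ (-δ)) * h r
          = (Real.exp (-δ) * c ^ (-δ)) * c ^ (-β) * h r := by ring
        _ ≤ Real.exp (-(((n:ℝ)+1)*δ)) * c ^ (-β) * h r :=
            mul_le_mul_of_nonneg_right (mul_le_mul_of_nonneg_right hexp2 hcb0) hhr0
        _ ≤ h (c*r) := u2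
  -- final statement
  refine ⟨R, hR1, fun r hr c hc0 hcr => ?_⟩
  have hr1 : (1:ℝ) ≤ r := le_trans hR1 hr
  have hhr0 : (0:ℝ) ≤ h r := (hpos r hr1).le
  rcases le_or_gt 1 c with hc1 | hc1
  · have hmax : max (c ^ δ) (c ^ (-δ)) = c ^ δ :=
      max_eq_left (Real.rpow_le_rpow_of_exponent_le hc1 (by linarith))
    have hmin : min (c ^ δ) (c ^ (-δ)) = c ^ (-δ) :=
      min_eq_right (Real.rpow_le_rpow_of_exponent_le hc1 (by linarith))
    rw [hmax, hmin]
    exact main1 r hr c hc1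
  · have hcinv1 : (1:ℝ) ≤ c⁻¹ := (one_le_inv_iff₀.2 ⟨hc0, hc1.le⟩)
    have hcr1 : (1:ℝ) ≤ c * r := le_trans hR1 hcr
    have hhcr0 : (0:ℝ) ≤ h (c*r) := (hpos _ hcr1).le
    have happ := main1 (c*r) hcr c⁻¹ hcinv1
    rw [inv_mul_cancel_left₀ hc0.ne'] at happ
    have hi1 : c⁻¹ ^ (-β) = c ^ β := by
      rw [Real.inv_rpow hc0.le, ← Real.rpow_neg hc0.le, neg_neg]
    have hi2 : c⁻¹ ^ δ = c ^ (-δ) := by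
      rw [Real.inv_rpow hc0.le, ← Real.rpow_neg hc0.le]
    have hi3 : c⁻¹ ^ (-δ) = c ^ δ := by
      rw [Real.inv_rpow hc0.le, ← Real.rpow_neg hc0.le, neg_neg]
    rw [hi1, hi2, hi3] at happ
    obtain ⟨v1, v2⟩ := happ
    have hmax : max (c ^ δ) (c ^ (-δ)) = c ^ (-δ) :=
      max_eq_right (Real.rpow_le_rpow_of_exponent_ge hc0 hc1.le (by linarith))
    have hmin : min (c ^ δ) (c ^ (-δ)) = c ^ δ :=
      min_eq_left (Real.rpow_le_rpow_of_exponent_ge hc0 hc1.le (by linarith))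
    rw [hmax, hmin]
    have A : Real.exp (-δ) * Real.exp δ = 1 := by rw [← Real.exp_add]; simp
    have B : c ^ (-β) * c ^ β = 1 := by rw [← Real.rpow_add hc0]; simp
    have Cc : c ^ δ * c ^ (-δ) = 1 := by rw [← Real.rpow_add hc0]; simp
    constructor
    · -- h (c*r) ≤ exp δ * (c^(-β) * c^(-δ)) * h r
      have E0 : (0:ℝ) ≤ Real.exp δ * (c ^ (-β) * c ^ (-δ)) := by positivity
      calc h (c*r) = (Real.exp δ * (c ^ (-β) * c ^ (-δ))) *
            (Real.exp (-δ) * (c ^ β * c ^ δ) * h (c*r)) := by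
            have : (Real.exp δ * (c ^ (-β) * c ^ (-δ))) * (Real.exp (-δ) * (c ^ β * c ^ δ)) = 1 := by
              calc (Real.exp δ * (c ^ (-β) * c ^ (-δ))) * (Real.exp (-δ) * (c ^ β * c ^ δ))
                  = (Real.exp (-δ) * Real.exp δ) * ((c ^ (-β) * c ^ β) * (c ^ δ * c ^ (-δ))) := by
                    ring
                _ = 1 := by rw [A, B, Cc]; ring
            nlinarith
        _ ≤ (Real.exp δ * (c ^ (-β) * c ^ (-δ))) * h r := mul_le_mul_of_nonneg_left v2 E0
    · -- exp (-δ) * (c^(-β) * c^δ) * h r ≤ h (c*r)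
      have E0 : (0:ℝ) ≤ Real.exp (-δ) * (c ^ (-β) * c ^ δ) := by positivity
      calc Real.exp (-δ) * (c ^ (-β) * c ^ δ) * h r
          ≤ (Real.exp (-δ) * (c ^ (-β) * c ^ δ)) * (Real.exp δ * (c ^ β * c ^ (-δ)) * h (c*r)) :=
            mul_le_mul_of_nonneg_left v1 E0
        _ = h (c*r) := by
            have : (Real.exp (-δ) * (c ^ (-β) * c ^ δ)) * (Real.exp δ * (c ^ β * c ^ (-δ))) = 1 := by
              calc (Real.exp (-δ) * (c ^ (-β) * c ^ δ)) * (Real.exp δ * (c ^ β * c ^ (-δ)))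
                  = (Real.exp (-δ) * Real.exp δ) * ((c ^ (-β) * c ^ β) * (c ^ δ * c ^ (-δ))) := by
                    ring
                _ = 1 := by rw [A, B, Cc]; ring
            nlinarith

/-- `l : (0,∞) → (0,∞)` is slowly varying at infinity if `l(cr)/l(r) → 1` as `r → ∞`
for every `c > 0`. -/
def SlowlyVarying (l : ℝ → ℝ) : Prop :=
  ∀ c : ℝ, 0 < c → Filter.Tendsto (fun r => l (c * r) / l r) Filter.atTop (nhds 1)
theorem stmt3 (d : ℕ) (hd : 1 ≤ d) (α : ℝ) (hα : α ∈ Set.Ioo (0:ℝ) 2) (t : ℝ) (ht : 0 < t)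
    (lam : MeasureTheory.Measure ℝ) [SigmaFinite lam]
    (hlam0 : lam (Set.Iic 0) = 0) (hlam_ne : lam ≠ 0)
    (hmom : ∫⁻ z in Set.Ioi (0:ℝ), ENNReal.ofReal (min 1 (z ^ 2)) ∂lam ≠ ⊤)
    (hsmall : ∫⁻ z in Set.Ioc (0:ℝ) 1, ENNReal.ofReal (z ^ (α / (d:ℝ))) ∂lam ≠ ⊤)
    (β : ℝ) (hβ0 : 0 ≤ β) (hβ : β < α / (d:ℝ))
    (l : ℝ → ℝ) (hl : SlowlyVarying l) (hl_pos : ∀ x : ℝ, 0 < x → 0 < l x)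
    (hlaml : ∀ r : ℝ, 1 ≤ r → (lam (Set.Ioi r)).toReal = l r / r ^ β) :
    Filter.Tendsto
      (fun r : ℝ => (tauBar d α t lam r).toReal /
        (α / (α - (d:ℝ) * β) * t ^ (1 - (d:ℝ) * β / α) * (lam (Set.Ioi r)).toReal))
      Filter.atTop (nhds 1) := by
  obtain ⟨hα0, hα2⟩ := hα
  have hd0 : (0:ℝ) < (d:ℝ) := by exact_mod_cast Nat.pos_of_ne_zero (by omega)
  set p' : ℝ := (d:ℝ)/α with hp'def
  have hp'0 : 0 < p' := div_pos hd0 hα0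
  have hinvp : p' * (α/(d:ℝ)) = 1 := by rw [hp'def]; field_simp
  have hinv1p : 1/p' = α/(d:ℝ) := by rw [hp'def, one_div_div]
  set h : ℝ → ℝ := fun x => (lam (Set.Ioi x)).toReal with hdef
  -- finiteness of tails
  have hfin1 : lam (Set.Ioi (1:ℝ)) ≠ ⊤ := by
    refine ne_top_of_le_ne_top hmom ?_
    calc lam (Set.Ioi 1) = ∫⁻ _ in Set.Ioi (1:ℝ), 1 ∂lam := (setLIntegral_one _).symm
      _ = ∫⁻ z in Set.Ioi (1:ℝ), ENNReal.ofReal (min 1 (z^2)) ∂lam := by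
          refine (setLIntegral_congr_fun measurableSet_Ioi (fun z hz => ?_)).symm
          have hz1 : (1:ℝ) ≤ z := le_of_lt hz
          have : (1:ℝ) ≤ z^2 := by nlinarith
          rw [min_eq_left this]; norm_num
      _ ≤ ∫⁻ z in Set.Ioi (0:ℝ), ENNReal.ofReal (min 1 (z^2)) ∂lam :=
          lintegral_mono_set (Set.Ioi_subset_Ioi zero_le_one)
  have hfin : ∀ x : ℝ, 1 ≤ x → lam (Set.Ioi x) ≠ ⊤ := fun x hx =>
    ne_top_of_le_ne_top hfin1 (measure_mono (Set.Ioi_subset_Ioi hx))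
  have hposh : ∀ x : ℝ, 1 ≤ x → 0 < h x := by
    intro x hx
    have hx0 : 0 < x := lt_of_lt_of_le one_pos hx
    show 0 < (lam (Set.Ioi x)).toReal
    rw [hlaml x hx]
    exact div_pos (hl_pos x hx0) (Real.rpow_pos_of_pos hx0 β)
  have hmonoh : ∀ x y : ℝ, 1 ≤ x → x ≤ y → h y ≤ h x := fun x y hx hxy =>
    ENNReal.toReal_mono (hfin x hx) (measure_mono (Set.Ioi_subset_Ioi hxy))
  have hlimh : ∀ c : ℝ, 0 < c → Tendsto (fun r => h (c * r) / h r) atTop (nhds (c ^ (-β))) := by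
    intro c hc
    have h1 : Tendsto (fun r => l (c*r) / l r * c ^ (-β)) atTop (nhds (c ^ (-β))) := by
      have := (hl c hc).mul_const (c ^ (-β))
      simpa using this
    refine h1.congr' ?_
    filter_upwards [eventually_ge_atTop (max 1 c⁻¹)] with r hr
    have hr1 : (1:ℝ) ≤ r := le_trans (le_max_left _ _) hr
    have hr0 : (0:ℝ) < r := lt_of_lt_of_le one_pos hr1
    have hinvr : c⁻¹ ≤ r := le_trans (le_max_right _ _) hr
    have hcr : (1:ℝ) ≤ c * r := by
      rw [← mul_inv_cancel₀ hc.ne']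
      exact mul_le_mul_of_nonneg_left hinvr hc.le
    show l (c*r)/l r * c^(-β) = h (c*r) / h r
    show l (c*r)/l r * c^(-β) = (lam (Set.Ioi (c*r))).toReal / (lam (Set.Ioi r)).toReal
    rw [hlaml _ hcr, hlaml _ hr1, Real.mul_rpow hc.le hr0.le, Real.rpow_neg hc.le]
    have h2 : l r ≠ 0 := (hl_pos r hr0).ne'
    have h3 : r ^ β ≠ 0 := (Real.rpow_pos_of_pos hr0 β).ne'
    have h4 : c ^ β ≠ 0 := (Real.rpow_pos_of_pos hc β).ne'
    field_simp
  -- constants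
  have hpβ : p' * β < 1 := by
    have := mul_lt_mul_of_pos_left hβ hp'0
    rwa [hinvp] at this
  set θ : ℝ := (β + α/(d:ℝ))/2 with hθdef
  have hβθ : β < θ := by rw [hθdef]; linarith
  have hθαd : θ < α/(d:ℝ) := by rw [hθdef]; linarith
  have hθ0 : 0 < θ := lt_of_le_of_lt hβ0 hβθ
  have hp'θ : p' * θ < 1 := by
    have := mul_lt_mul_of_pos_left hθαd hp'0
    rwa [hinvp] at this
  have h1pθ : 0 < 1 - p' * θ := by linarith
  set M : ℝ := max t 1 with hMdef
  have hM1 : (1:ℝ) ≤ M := le_max_right _ _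
  have hM0 : (0:ℝ) < M := lt_of_lt_of_le one_pos hM1
  have htM : t ≤ M := le_max_left _ _
  set C : ℝ := t ^ (1 - p'*β) / (1 - p'*β) with hCdef
  have hC0 : 0 < C := div_pos (Real.rpow_pos_of_pos ht _) (by linarith)
  have hCst : α / (α - (d:ℝ)*β) * t ^ (1 - (d:ℝ)*β/α) = C := by
    have he : 1 - (d:ℝ)*β/α = 1 - p'*β := by rw [hp'def]; ring
    have hαdβ : 0 < α - (d:ℝ)*β := by
      have h5 : (d:ℝ)*β < α := by
        have := mul_lt_mul_of_pos_left hβ hd0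
        rwa [show (d:ℝ)*(α/(d:ℝ)) = α by field_simp] at this
      linarith
    rw [he, hCdef, eq_div_iff (by linarith : (1:ℝ) - p'*β ≠ 0), hp'def]
    field_simp
  set K1 : ℝ≥0∞ := ∫⁻ z in Set.Ioc (0:ℝ) 1, ENNReal.ofReal (z ^ (α / (d:ℝ))) ∂lam with hK1def
  set K1T : ℝ := K1.toReal with hK1Tdef
  have hK1T0 : 0 ≤ K1T := ENNReal.toReal_nonneg
  -- start the tendsto proof
  rw [Metric.tendsto_nhds]
  intro ε hε
  set η : ℝ := min (ε/2) (1/2) with hηdef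
  have hη0 : 0 < η := lt_min (by linarith) (by norm_num)
  have hη1 : η ≤ 1/2 := min_le_right _ _
  have hηε : η < ε := lt_of_le_of_lt (min_le_left _ _) (by linarith)
  -- choose δ
  obtain ⟨δ, hδ0, hδ1, hδ2, hδup, hδlow⟩ : ∃ δ : ℝ, 0 < δ ∧ p'*δ < 1 - p'*β ∧ δ < θ - β ∧
      Real.exp δ * M ^ (2*(p'*δ)) * (t ^ (1 - p'*β - p'*δ) / (1 - p'*β - p'*δ)) < (1+η/2)*C ∧
      (1-η/2)*C < Real.exp (-δ) * M ^ (-(2*(p'*δ))) *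
        (t ^ (1 + p'*δ - p'*β) / (1 + p'*δ - p'*β)) := by
    have T0 : Tendsto (fun x : ℝ => x) (nhdsWithin 0 (Set.Ioi (0:ℝ))) (nhds 0) :=
      tendsto_id.mono_left nhdsWithin_le_nhds
    have c1 : ∀ᶠ x in nhdsWithin (0:ℝ) (Set.Ioi (0:ℝ)), x ∈ Set.Ioi (0:ℝ) := self_mem_nhdsWithin
    have Tp : Tendsto (fun x : ℝ => p'*x) (nhdsWithin 0 (Set.Ioi (0:ℝ))) (nhds 0) := by
      simpa using T0.const_mul p'
    have c2 := Tp.eventually_lt_const (by linarith : (0:ℝ) < 1 - p'*β)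
    have c3 := T0.eventually_lt_const (by linarith : (0:ℝ) < θ - β)
    set F : ℝ → ℝ := fun x => Real.exp x * M ^ (2*(p'*x)) *
      (t ^ (1 - p'*β - p'*x) / (1 - p'*β - p'*x)) with hFdef
    have CAF : ContinuousAt F 0 := by
      have CA1 : ContinuousAt Real.exp 0 := Real.continuous_exp.continuousAt
      have CA2 : ContinuousAt (fun x : ℝ => M ^ (2*(p'*x))) 0 :=
        (Real.continuousAt_const_rpow hM0.ne').comp
          (Continuous.continuousAt (continuous_const.mul (continuous_const.mul continuous_id)))
      have CA3 : ContinuousAt (fun x : ℝ => t ^ (1 - p'*β - p'*x)) 0 :=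
        (Real.continuousAt_const_rpow ht.ne').comp
          (Continuous.continuousAt
            (continuous_const.sub (continuous_const.mul continuous_id)))
      have CA4 : ContinuousAt (fun x : ℝ => 1 - p'*β - p'*x) 0 :=
        Continuous.continuousAt (continuous_const.sub (continuous_const.mul continuous_id))
      exact (CA1.mul CA2).mul (CA3.div CA4 (by norm_num; linarith))
    have hF0 : F 0 = C := by
      rw [hFdef]; simp [Real.exp_zero, hCdef]
    have TF : Tendsto F (nhdsWithin 0 (Set.Ioi (0:ℝ))) (nhds C) := by
      rw [← hF0]
      exact CAF.tendsto.mono_left nhdsWithin_le_nhds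
    have c4 := TF.eventually_lt_const (by nlinarith : C < (1+η/2)*C)
    set G : ℝ → ℝ := fun x => Real.exp (-x) * M ^ (-(2*(p'*x))) *
      (t ^ (1 + p'*x - p'*β) / (1 + p'*x - p'*β)) with hGdef
    have CAG : ContinuousAt G 0 := by
      have CA1 : ContinuousAt (fun x : ℝ => Real.exp (-x)) 0 :=
        Continuous.continuousAt (Real.continuous_exp.comp continuous_neg)
      have CA2 : ContinuousAt (fun x : ℝ => M ^ (-(2*(p'*x)))) 0 :=
        (Real.continuousAt_const_rpow hM0.ne').comp
          (Continuous.continuousAt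
            ((continuous_const.mul (continuous_const.mul continuous_id)).neg))
      have CA3 : ContinuousAt (fun x : ℝ => t ^ (1 + p'*x - p'*β)) 0 :=
        (Real.continuousAt_const_rpow ht.ne').comp
          (Continuous.continuousAt
            ((continuous_const.add (continuous_const.mul continuous_id)).sub continuous_const))
      have CA4 : ContinuousAt (fun x : ℝ => 1 + p'*x - p'*β) 0 :=
        Continuous.continuousAt
          ((continuous_const.add (continuous_const.mul continuous_id)).sub continuous_const)
      exact (CA1.mul CA2).mul (CA3.div CA4 (by norm_num; linarith))
    have hG0 : G 0 = C := by
      rw [hGdef]; simp [Real.exp_zero, hCdef]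
    have TG : Tendsto G (nhdsWithin 0 (Set.Ioi (0:ℝ))) (nhds C) := by
      rw [← hG0]
      exact CAG.tendsto.mono_left nhdsWithin_le_nhds
    have c5 := TG.eventually_const_lt (by nlinarith : (1-η/2)*C < C)
    obtain ⟨x, hx1, hx2, hx3, hx4, hx5⟩ := (c1.and (c2.and (c3.and (c4.and c5)))).exists
    exact ⟨x, hx1, hx2, hx3, hx4, hx5⟩
  set e : ℝ := 1 + p'*δ - p'*β with hedef
  have he0 : 0 < e := by
    have := mul_pos hp'0 hδ0
    rw [hedef]; linarith
  set q : ℝ := -(p'*β) - p'*δ with hqdef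
  have hq1 : -1 < q := by rw [hqdef]; linarith
  have hq2 : (-1:ℝ) < p'*δ - p'*β := by
    have := mul_pos hp'0 hδ0
    linarith
  obtain ⟨R, hR1, hpot⟩ := potter_aux h hmonoh hposh β hβ0 hlimh δ hδ0
  have hR0 : (0:ℝ) < R := lt_of_lt_of_le one_pos hR1
  set κ : ℝ := Real.exp (-δ) * R ^ (β+δ) * h R with hκdef
  have hκ0 : 0 < κ := by
    have := hposh R hR1
    rw [hκdef]; positivity
  -- eventual conditions
  have ev1 : ∀ᶠ r : ℝ in atTop, R ≤ r := eventually_ge_atTop R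
  have ev2 : ∀ᶠ r : ℝ in atTop, R ≤ r ^ (1 - p'*θ) ∧ (1:ℝ) ≤ r ^ (1 - p'*θ) := by
    have h5 := tendsto_rpow_atTop h1pθ
    exact (h5.eventually_ge_atTop R).and (h5.eventually_ge_atTop 1)
  have ev3 : ∀ᶠ r : ℝ in atTop, r ^ (-θ) < t :=
    (tendsto_rpow_neg_atTop hθ0).eventually_lt_const ht
  have ev4 : ∀ᶠ r : ℝ in atTop,
      Real.exp (-δ) * M ^ (-(2*(p'*δ))) * ((r ^ (-θ)) ^ e / e) < (η/2)*C := by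
    have h1 : Tendsto (fun r : ℝ => r ^ (-θ)) atTop (nhds 0) := tendsto_rpow_neg_atTop hθ0
    have h3 : ContinuousAt (fun x : ℝ => x ^ e) 0 := Real.continuousAt_rpow_const 0 e (Or.inr he0.le)
    have h2 : ContinuousAt (fun x : ℝ => Real.exp (-δ) * M ^ (-(2*(p'*δ))) * (x ^ e / e)) 0 :=
      continuousAt_const.mul (h3.div_const e)
    have h4 := h2.tendsto.comp h1
    have h5 : Tendsto (fun r : ℝ => Real.exp (-δ) * M ^ (-(2*(p'*δ))) * ((r ^ (-θ)) ^ e / e))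
        atTop (nhds 0) := by
      simpa [Real.zero_rpow he0.ne', Function.comp_def] using h4
    exact h5.eventually_lt_const (by positivity)
  have ev5 : ∀ᶠ r : ℝ in atTop,
      K1T * r ^ ((β+δ) - 1/p') + 2 * h 1 * r ^ ((β+δ) - θ) < (η/2)*C*κ := by
    have u1 : Tendsto (fun r : ℝ => r ^ ((β+δ) - 1/p')) atTop (nhds 0) := by
      have hlt : 0 < 1/p' - (β+δ) := by
        have h6 : β + δ < θ := by linarith
        have h1p : θ < 1/p' := by rw [hinv1p]; exact hθαd
        linarith
      simpa [neg_sub] using tendsto_rpow_neg_atTop hlt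
    have u2 : Tendsto (fun r : ℝ => r ^ ((β+δ) - θ)) atTop (nhds 0) := by
      have hlt : 0 < θ - (β+δ) := by linarith
      simpa [neg_sub] using tendsto_rpow_neg_atTop hlt
    have u3 : Tendsto (fun r : ℝ => K1T * r ^ ((β+δ) - 1/p') + 2*h 1*r^((β+δ)-θ))
        atTop (nhds 0) := by
      have := (u1.const_mul K1T).add (u2.const_mul (2*h 1))
      simpa using this
    exact u3.eventually_lt_const (by positivity)
  filter_upwards [ev1, ev2, ev3, ev4, ev5] with r hrR hrX hrσ hre4 hre5
  have hr1 : (1:ℝ) ≤ r := le_trans hR1 hrR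
  have hr0 : (0:ℝ) < r := lt_of_lt_of_le one_pos hr1
  have hhr0 : 0 < h r := hposh r hr1
  have hhr1 : 0 ≤ h 1 := (hposh 1 le_rfl).le
  set σ : ℝ := r ^ (-θ) with hσdef
  have hσ0 : 0 < σ := Real.rpow_pos_of_pos hr0 _
  have hσt : σ ≤ t := hrσ.le
  set X : ℝ := r ^ (1 - p'*θ) with hXdef
  have hX1 : (1:ℝ) ≤ X := hrX.2
  have hXR : R ≤ X := hrX.1
  have hX0 : (0:ℝ) < X := lt_of_lt_of_le one_pos hX1
  have hXeq : r * σ ^ p' = X := by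
    rw [hσdef, hXdef]
    rw [show ((r ^ (-θ):ℝ) ^ p') = r ^ ((-θ)*p') from (Real.rpow_mul hr0.le _ _).symm]
    calc r * r ^ ((-θ)*p') = r ^ (1:ℝ) * r ^ ((-θ)*p') := by rw [Real.rpow_one]
      _ = r ^ (1 + (-θ)*p') := (Real.rpow_add hr0 _ _).symm
      _ = r ^ (1 - p'*θ) := by ring_nf
  have htau : tauBar d α t lam r = ∫⁻ s in Set.Ioc (0:ℝ) t, lam (Set.Ioi (r * s ^ p')) := by
    rw [tauBar_eq d α t lam r hr0.le, ← hp'def]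
  have hsplit : (∫⁻ s in Set.Ioc (0:ℝ) t, lam (Set.Ioi (r * s ^ p'))) =
      (∫⁻ s in Set.Ioc (0:ℝ) σ, lam (Set.Ioi (r * s ^ p'))) +
      (∫⁻ s in Set.Ioc σ t, lam (Set.Ioi (r * s ^ p'))) := by
    rw [← Set.Ioc_union_Ioc_eq_Ioc hσ0.le hσt,
      lintegral_union measurableSet_Ioc (Set.Ioc_disjoint_Ioc_of_le le_rfl)]
  have hpoint : ∀ s ∈ Set.Ioc σ t, (R ≤ r * s ^ p' ∧ 1 ≤ r * s ^ p') := by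
    intro s hs
    have hs0 : 0 < s := lt_trans hσ0 hs.1
    have h5 : σ ^ p' ≤ s ^ p' := Real.rpow_le_rpow hσ0.le hs.1.le hp'0.le
    have hXle : X ≤ r * s ^ p' := by
      rw [← hXeq]; exact mul_le_mul_of_nonneg_left h5 hr0.le
    exact ⟨le_trans hXR hXle, le_trans hX1 hXle⟩
  have hA2up : (∫⁻ s in Set.Ioc σ t, lam (Set.Ioi (r * s ^ p'))) ≤
      ENNReal.ofReal ((Real.exp δ * M ^ (2*(p'*δ)) * h r) *
        (t ^ (1 - p'*β - p'*δ) / (1 - p'*β - p'*δ))) := by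
    have hc00 : 0 ≤ Real.exp δ * M ^ (2*(p'*δ)) * h r :=
      mul_nonneg (mul_nonneg (Real.exp_pos δ).le (Real.rpow_nonneg hM0.le _)) hhr0.le
    have step1 : (∫⁻ s in Set.Ioc σ t, lam (Set.Ioi (r * s ^ p'))) ≤
        ∫⁻ s in Set.Ioc σ t, ENNReal.ofReal ((Real.exp δ * M ^ (2*(p'*δ)) * h r) * s ^ q) := by
      refine setLIntegral_mono' measurableSet_Ioc (fun s hs => ?_)
      obtain ⟨hsR, hs1⟩ := hpoint s hs
      have hs0 : 0 < s := lt_trans hσ0 hs.1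
      have hsM : s ≤ M := le_trans hs.2 htM
      have hsp0 : 0 < s ^ p' := Real.rpow_pos_of_pos hs0 _
      rw [show lam (Set.Ioi (r * s ^ p')) = ENNReal.ofReal (h (r * s ^ p'))
        from (ENNReal.ofReal_toReal (hfin _ hs1)).symm]
      apply ENNReal.ofReal_le_ofReal
      have hpb := (hpot r hrR (s ^ p') hsp0 (by rwa [mul_comm])).1
      rw [mul_comm r (s ^ p')]
      refine le_trans hpb ?_
      have hbb : ((s:ℝ) ^ p') ^ (-β) = s ^ (p' * (-β)) := (Real.rpow_mul hs0.le _ _).symm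
      have hdd : ((s:ℝ) ^ p') ^ δ = s ^ (p'*δ) := (Real.rpow_mul hs0.le _ _).symm
      have hdd' : ((s:ℝ) ^ p') ^ (-δ) = s ^ (-(p'*δ)) := by
        rw [← Real.rpow_mul hs0.le]; congr 1; ring
      rw [hbb, hdd, hdd']
      have hmax := maxb hs0 hsM hM1 (le_of_lt (mul_pos hp'0 hδ0))
      have hsb0 : 0 ≤ s ^ (p'*(-β)) := Real.rpow_nonneg hs0.le _
      have hq' : s ^ q = s ^ (p'*(-β)) * s ^ (-(p'*δ)) := by
        rw [← Real.rpow_add hs0]; congr 1; rw [hqdef]; ring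
      calc Real.exp δ * (s ^ (p'*(-β)) * max (s^(p'*δ)) (s^(-(p'*δ)))) * h r
          ≤ Real.exp δ * (s ^ (p'*(-β)) * (M^(2*(p'*δ)) * s^(-(p'*δ)))) * h r := by
            refine mul_le_mul_of_nonneg_right
              (mul_le_mul_of_nonneg_left ?_ (Real.exp_pos δ).le) hhr0.le
            exact mul_le_mul_of_nonneg_left hmax hsb0
        _ = (Real.exp δ * M ^ (2*(p'*δ)) * h r) * s ^ q := by rw [hq']; ring
    refine le_trans step1 ?_
    have hq3 : q + 1 = 1 - p'*β - p'*δ := by rw [hqdef]; ring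
    calc ∫⁻ s in Set.Ioc σ t, ENNReal.ofReal ((Real.exp δ * M ^ (2*(p'*δ)) * h r) * s ^ q)
        ≤ ∫⁻ s in Set.Ioc (0:ℝ) t, ENNReal.ofReal ((Real.exp δ * M ^ (2*(p'*δ)) * h r) * s ^ q) :=
          lintegral_mono_set (Set.Ioc_subset_Ioc_left hσ0.le)
      _ = ENNReal.ofReal (Real.exp δ * M ^ (2*(p'*δ)) * h r) *
          ∫⁻ s in Set.Ioc (0:ℝ) t, ENNReal.ofReal (s ^ q) := by
          simp_rw [ENNReal.ofReal_mul hc00]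
          rw [lintegral_const_mul' _ _ ENNReal.ofReal_ne_top]
      _ = ENNReal.ofReal (Real.exp δ * M ^ (2*(p'*δ)) * h r) *
          ENNReal.ofReal (t ^ (1 - p'*β - p'*δ) / (1 - p'*β - p'*δ)) := by
          rw [lint_rpow le_rfl ht.le hq1,
            Real.zero_rpow (by rw [hq3]; exact (by linarith : (0:ℝ) < 1-p'*β-p'*δ).ne'),
            sub_zero, hq3]
      _ = ENNReal.ofReal (Real.exp δ * M ^ (2*(p'*δ)) * h r *
          (t ^ (1 - p'*β - p'*δ) / (1 - p'*β - p'*δ))) := (ENNReal.ofReal_mul hc00).symm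
  have hA2low : ENNReal.ofReal ((Real.exp (-δ) * M ^ (-(2*(p'*δ))) * h r) * ((t ^ e - σ ^ e)/e)) ≤
      (∫⁻ s in Set.Ioc σ t, lam (Set.Ioi (r * s ^ p'))) := by
    have hc10 : 0 ≤ Real.exp (-δ) * M ^ (-(2*(p'*δ))) * h r :=
      mul_nonneg (mul_nonneg (Real.exp_pos _).le (Real.rpow_nonneg hM0.le _)) hhr0.le
    have step1 : (∫⁻ s in Set.Ioc σ t,
        ENNReal.ofReal ((Real.exp (-δ) * M ^ (-(2*(p'*δ))) * h r) * s ^ (p'*δ - p'*β))) ≤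
        ∫⁻ s in Set.Ioc σ t, lam (Set.Ioi (r * s ^ p')) := by
      refine setLIntegral_mono' measurableSet_Ioc (fun s hs => ?_)
      obtain ⟨hsR, hs1⟩ := hpoint s hs
      have hs0 : 0 < s := lt_trans hσ0 hs.1
      have hsM : s ≤ M := le_trans hs.2 htM
      have hsp0 : 0 < s ^ p' := Real.rpow_pos_of_pos hs0 _
      rw [show lam (Set.Ioi (r * s ^ p')) = ENNReal.ofReal (h (r * s ^ p'))
        from (ENNReal.ofReal_toReal (hfin _ hs1)).symm]
      apply ENNReal.ofReal_le_ofReal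
      have hpb := (hpot r hrR (s ^ p') hsp0 (by rwa [mul_comm])).2
      rw [mul_comm r (s ^ p')]
      refine le_trans ?_ hpb
      have hbb : ((s:ℝ) ^ p') ^ (-β) = s ^ (p' * (-β)) := (Real.rpow_mul hs0.le _ _).symm
      have hdd : ((s:ℝ) ^ p') ^ δ = s ^ (p'*δ) := (Real.rpow_mul hs0.le _ _).symm
      have hdd' : ((s:ℝ) ^ p') ^ (-δ) = s ^ (-(p'*δ)) := by
        rw [← Real.rpow_mul hs0.le]; congr 1; ring
      rw [hbb, hdd, hdd']
      have hmin := minb hs0 hsM hM1 (le_of_lt (mul_pos hp'0 hδ0))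
      have hsb0 : 0 ≤ s ^ (p'*(-β)) := Real.rpow_nonneg hs0.le _
      have hq' : s ^ (p'*δ - p'*β) = s ^ (p'*(-β)) * s ^ (p'*δ) := by
        rw [← Real.rpow_add hs0]; congr 1; ring
      calc (Real.exp (-δ) * M ^ (-(2*(p'*δ))) * h r) * s ^ (p'*δ - p'*β)
          = Real.exp (-δ) * (s ^ (p'*(-β)) * (M^(-(2*(p'*δ))) * s^(p'*δ))) * h r := by
            rw [hq']; ring
        _ ≤ Real.exp (-δ) * (s ^ (p'*(-β)) * min (s^(p'*δ)) (s^(-(p'*δ)))) * h r := by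
            refine mul_le_mul_of_nonneg_right
              (mul_le_mul_of_nonneg_left ?_ (Real.exp_pos _).le) hhr0.le
            exact mul_le_mul_of_nonneg_left hmin hsb0
    refine le_trans ?_ step1
    have heq : (∫⁻ s in Set.Ioc σ t,
        ENNReal.ofReal ((Real.exp (-δ) * M ^ (-(2*(p'*δ))) * h r) * s ^ (p'*δ - p'*β))) =
        ENNReal.ofReal (Real.exp (-δ) * M ^ (-(2*(p'*δ))) * h r) *
          ENNReal.ofReal ((t^e - σ^e)/e) := by
      simp_rw [ENNReal.ofReal_mul hc10]
      rw [lintegral_const_mul' _ _ ENNReal.ofReal_ne_top, lint_rpow hσ0.le hσt hq2,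
        show p'*δ - p'*β + 1 = e from by rw [hedef]; ring]
    rw [ENNReal.ofReal_mul hc10, ← heq]
  have hA1up : (∫⁻ s in Set.Ioc (0:ℝ) σ, lam (Set.Ioi (r * s ^ p'))) ≤
      ENNReal.ofReal (K1T * r ^ (-(1/p')) + 2 * h 1 * r ^ (-θ)) := by
    rw [small_part_eq lam p' r σ hr0.le, ← Set.Ioc_union_Ioi_eq_Ioi hX0.le,
      lintegral_union measurableSet_Ioi Set.Ioc_disjoint_Ioi_same]
    have hr1p0 : 0 ≤ r ^ (-(1/p')) := Real.rpow_nonneg hr0.le _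
    have hX1p0 : 0 ≤ X ^ (1/p') := Real.rpow_nonneg hX0.le _
    have parta : (∫⁻ z in Set.Ioc (0:ℝ) X, volume ({s : ℝ | r * s ^ p' < z} ∩ Set.Ioc 0 σ) ∂lam)
        ≤ ENNReal.ofReal (K1T * r ^ (-(1/p')) + r ^ (-θ) * h 1) := by
      have step1 : (∫⁻ z in Set.Ioc (0:ℝ) X,
          volume ({s : ℝ | r * s ^ p' < z} ∩ Set.Ioc 0 σ) ∂lam)
          ≤ ∫⁻ z in Set.Ioc (0:ℝ) X, ENNReal.ofReal (r ^ (-(1/p')) * z ^ (1/p')) ∂lam := by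
        refine setLIntegral_mono' measurableSet_Ioc (fun z hz => ?_)
        have hz0 : 0 < z := hz.1
        have hzr0 : 0 < z/r := div_pos hz0 hr0
        have hw0 : 0 < (z/r) ^ (1/p') := Real.rpow_pos_of_pos hzr0 _
        have hsub : {s : ℝ | r * s ^ p' < z} ∩ Set.Ioc 0 σ ⊆ Set.Ioo 0 ((z/r) ^ (1/p')) := by
          rintro s ⟨hs1, hs2⟩
          refine ⟨hs2.1, ?_⟩
          by_contra hcon
          push_neg at hcon
          have h7 := Real.rpow_le_rpow hw0.le hcon hp'0.le
          rw [← Real.rpow_mul hzr0.le, show (1/p')*p' = 1 from by field_simp,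
            Real.rpow_one] at h7
          have h8 : z ≤ r * s ^ p' := by
            rw [div_le_iff₀ hr0] at h7
            linarith [h7]
          exact absurd hs1 (not_lt.2 h8)
        calc volume ({s : ℝ | r * s ^ p' < z} ∩ Set.Ioc 0 σ)
            ≤ volume (Set.Ioo 0 ((z/r) ^ (1/p'))) := measure_mono hsub
          _ = ENNReal.ofReal ((z/r) ^ (1/p')) := by rw [Real.volume_Ioo, sub_zero]
          _ = ENNReal.ofReal (r ^ (-(1/p')) * z ^ (1/p')) := by
              congr 1
              rw [Real.div_rpow hz0.le hr0.le, Real.rpow_neg hr0.le, div_eq_mul_inv, mul_comm]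
      refine le_trans step1 ?_
      have inner : (∫⁻ z in Set.Ioc (0:ℝ) X, ENNReal.ofReal (z ^ (1/p')) ∂lam)
          ≤ K1 + ENNReal.ofReal (X ^ (1/p') * h 1) := by
        rw [← Set.Ioc_union_Ioc_eq_Ioc zero_le_one hX1,
          lintegral_union measurableSet_Ioc (Set.Ioc_disjoint_Ioc_of_le le_rfl)]
        refine add_le_add (le_of_eq ?_) ?_
        · rw [hK1def, ← hinv1p]
        · calc (∫⁻ z in Set.Ioc (1:ℝ) X, ENNReal.ofReal (z ^ (1/p')) ∂lam)
              ≤ ∫⁻ _ in Set.Ioc (1:ℝ) X, ENNReal.ofReal (X ^ (1/p')) ∂lam := by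
                refine setLIntegral_mono' measurableSet_Ioc (fun z hz => ?_)
                exact ENNReal.ofReal_le_ofReal
                  (Real.rpow_le_rpow (le_trans zero_le_one hz.1.le) hz.2 (by positivity))
            _ = ENNReal.ofReal (X ^ (1/p')) * lam (Set.Ioc 1 X) := setLIntegral_const _ _
            _ ≤ ENNReal.ofReal (X ^ (1/p')) * lam (Set.Ioi 1) :=
                mul_le_mul_right (measure_mono Set.Ioc_subset_Ioi_self) _
            _ = ENNReal.ofReal (X ^ (1/p')) * ENNReal.ofReal (h 1) := by
                rw [ENNReal.ofReal_toReal hfin1]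
            _ = ENNReal.ofReal (X ^ (1/p') * h 1) := (ENNReal.ofReal_mul hX1p0).symm
      have hXr : r ^ (-(1/p')) * X ^ (1/p') = r ^ (-θ) := by
        rw [hXdef, show ((r ^ (1 - p'*θ):ℝ) ^ (1/p')) = r ^ ((1-p'*θ)*(1/p'))
          from (Real.rpow_mul hr0.le _ _).symm, ← Real.rpow_add hr0]
        congr 1
        field_simp
        ring
      calc (∫⁻ z in Set.Ioc (0:ℝ) X, ENNReal.ofReal (r ^ (-(1/p')) * z ^ (1/p')) ∂lam)
          = ENNReal.ofReal (r ^ (-(1/p'))) *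
            ∫⁻ z in Set.Ioc (0:ℝ) X, ENNReal.ofReal (z ^ (1/p')) ∂lam := by
            simp_rw [ENNReal.ofReal_mul hr1p0]
            rw [lintegral_const_mul' _ _ ENNReal.ofReal_ne_top]
        _ ≤ ENNReal.ofReal (r ^ (-(1/p'))) * (K1 + ENNReal.ofReal (X ^ (1/p') * h 1)) :=
            mul_le_mul_right inner _
        _ = ENNReal.ofReal (r ^ (-(1/p'))) *
            (ENNReal.ofReal (K1T + X ^ (1/p') * h 1)) := by
            rw [← ENNReal.ofReal_toReal hsmall, ← hK1Tdef,
              ENNReal.ofReal_add hK1T0 (mul_nonneg hX1p0 hhr1)]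
        _ = ENNReal.ofReal (r ^ (-(1/p')) * (K1T + X ^ (1/p') * h 1)) :=
            (ENNReal.ofReal_mul hr1p0).symm
        _ = ENNReal.ofReal (K1T * r ^ (-(1/p')) + r ^ (-θ) * h 1) := by
            congr 1
            rw [mul_add, ← mul_assoc, hXr]
            ring
    have partb : (∫⁻ z in Set.Ioi X, volume ({s : ℝ | r * s ^ p' < z} ∩ Set.Ioc 0 σ) ∂lam)
        ≤ ENNReal.ofReal (r ^ (-θ) * h 1) := by
      calc (∫⁻ z in Set.Ioi X, volume ({s : ℝ | r * s ^ p' < z} ∩ Set.Ioc 0 σ) ∂lam)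
          ≤ ∫⁻ _ in Set.Ioi X, ENNReal.ofReal σ ∂lam := by
            refine setLIntegral_mono' measurableSet_Ioi (fun z hz => ?_)
            refine le_trans (measure_mono Set.inter_subset_right) ?_
            rw [Real.volume_Ioc, sub_zero]
        _ = ENNReal.ofReal σ * lam (Set.Ioi X) := setLIntegral_const _ _
        _ = ENNReal.ofReal σ * ENNReal.ofReal (h X) := by
            rw [ENNReal.ofReal_toReal (hfin X hX1)]
        _ = ENNReal.ofReal (σ * h X) := (ENNReal.ofReal_mul hσ0.le).symm
        _ ≤ ENNReal.ofReal (r ^ (-θ) * h 1) := by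
            apply ENNReal.ofReal_le_ofReal
            show σ * h X ≤ r ^ (-θ) * h 1
            rw [← hσdef]
            exact mul_le_mul_of_nonneg_left (hmonoh 1 X le_rfl hX1) hσ0.le
    refine le_trans (add_le_add parta partb) ?_
    rw [← ENNReal.ofReal_add
      (add_nonneg (mul_nonneg hK1T0 hr1p0) (mul_nonneg (Real.rpow_nonneg hr0.le _) hhr1))
      (mul_nonneg (Real.rpow_nonneg hr0.le _) hhr1)]
    exact ENNReal.ofReal_le_ofReal (le_of_eq (by ring))
  have hrlow : κ * r ^ (-(β+δ)) ≤ h r := by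
    have hcR : 0 < r / R := div_pos hr0 hR0
    have hmul : (r/R) * R = r := div_mul_cancel₀ r hR0.ne'
    have happ := (hpot R le_rfl (r/R) hcR (by rw [hmul]; exact hrR)).2
    rw [hmul] at happ
    have hrR1 : 1 ≤ r / R := (one_le_div₀ hR0).2 hrR
    have hmin : min ((r/R)^δ) ((r/R)^(-δ)) = (r/R)^(-δ) :=
      min_eq_right (Real.rpow_le_rpow_of_exponent_le hrR1 (by linarith))
    rw [hmin] at happ
    refine le_trans (le_of_eq ?_) happ
    have hcomb : ((r/R):ℝ)^(-β) * (r/R)^(-δ) = (r/R)^(-(β+δ)) := by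
      rw [← Real.rpow_add hcR]; congr 1; ring
    rw [hcomb, show ((r/R):ℝ)^(-(β+δ)) = r^(-(β+δ)) * R^(β+δ) from by
      rw [Real.div_rpow hr0.le hR0.le, Real.rpow_neg hR0.le, div_eq_mul_inv, inv_inv], hκdef]
    ring
  -- combine
  have hup_total : tauBar d α t lam r ≤ ENNReal.ofReal ((1+η)*C*h r) := by
    rw [htau, hsplit]
    refine le_trans (add_le_add hA1up hA2up) ?_
    rw [← ENNReal.ofReal_add
      (add_nonneg (mul_nonneg hK1T0 (Real.rpow_nonneg hr0.le _))
        (mul_nonneg (by linarith) (Real.rpow_nonneg hr0.le _)))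
      (mul_nonneg (mul_nonneg (mul_nonneg (Real.exp_pos δ).le (Real.rpow_nonneg hM0.le _)) hhr0.le)
        (div_nonneg (Real.rpow_nonneg ht.le _) (by linarith)))]
    apply ENNReal.ofReal_le_ofReal
    have b1 : K1T * r ^ (-(1/p')) + 2*h 1*r^(-θ) ≤ (η/2)*C*h r := by
      have ea : r ^ (-(1/p')) = r ^ ((β+δ)-1/p') * r^(-(β+δ)) := by
        rw [← Real.rpow_add hr0]; congr 1; ring
      have eb : r ^ (-θ) = r ^ ((β+δ)-θ) * r^(-(β+δ)) := by
        rw [← Real.rpow_add hr0]; congr 1; ring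
      have step : K1T * r ^ (-(1/p')) + 2*h 1*r^(-θ) =
          (K1T * r^((β+δ)-1/p') + 2*h 1*r^((β+δ)-θ)) * r^(-(β+δ)) := by
        rw [ea, eb]; ring
      rw [step]
      calc (K1T * r^((β+δ)-1/p') + 2*h 1*r^((β+δ)-θ)) * r^(-(β+δ))
          ≤ ((η/2)*C*κ) * r^(-(β+δ)) :=
            mul_le_mul_of_nonneg_right hre5.le (Real.rpow_nonneg hr0.le _)
        _ = (η/2)*C*(κ * r^(-(β+δ))) := by ring
        _ ≤ (η/2)*C*h r := mul_le_mul_of_nonneg_left hrlow (by positivity)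
    have b2 : Real.exp δ * M ^ (2*(p'*δ)) * h r * (t ^ (1-p'*β-p'*δ)/(1-p'*β-p'*δ)) ≤
        (1+η/2)*C*h r := by
      calc Real.exp δ * M ^ (2*(p'*δ)) * h r * (t^(1-p'*β-p'*δ)/(1-p'*β-p'*δ))
          = (Real.exp δ * M^(2*(p'*δ)) * (t^(1-p'*β-p'*δ)/(1-p'*β-p'*δ))) * h r := by ring
        _ ≤ ((1+η/2)*C) * h r := mul_le_mul_of_nonneg_right hδup.le hhr0.le
        _ = (1+η/2)*C*h r := by ring
    linarith
  have hlow_total : ENNReal.ofReal ((1-η)*C*h r) ≤ tauBar d α t lam r := by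
    rw [htau, hsplit]
    refine le_trans ?_ le_add_self
    refine le_trans ?_ hA2low
    apply ENNReal.ofReal_le_ofReal
    have expand : (Real.exp (-δ) * M ^ (-(2*(p'*δ))) * h r) * ((t^e - σ^e)/e) =
        (Real.exp (-δ) * M ^ (-(2*(p'*δ))) * (t^e/e) -
         Real.exp (-δ) * M ^ (-(2*(p'*δ))) * (σ^e/e)) * h r := by ring
    rw [expand]
    have hlo : (1-η)*C ≤ Real.exp (-δ) * M^(-(2*(p'*δ))) * (t^e/e) -
        Real.exp (-δ)*M^(-(2*(p'*δ)))*(σ^e/e) := by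
      have h6 := hre4
      have h7 := hδlow
      rw [hedef] at *
      linarith
    exact mul_le_mul_of_nonneg_right hlo hhr0.le
  have hfinA : tauBar d α t lam r ≠ ⊤ := ne_top_of_le_ne_top ENNReal.ofReal_ne_top hup_total
  have hub : (tauBar d α t lam r).toReal ≤ (1+η)*C*h r :=
    ENNReal.toReal_le_of_le_ofReal (by positivity) hup_total
  have hlb : (1-η)*C*h r ≤ (tauBar d α t lam r).toReal :=
    (ENNReal.ofReal_le_iff_le_toReal hfinA).1 hlow_total
  have hden : 0 < C * h r := mul_pos hC0 hhr0
  rw [Real.dist_eq, hCst]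
  have hgr : (lam (Set.Ioi r)).toReal = h r := rfl
  rw [hgr]
  have h1 : (tauBar d α t lam r).toReal / (C * h r) ≤ 1+η := by
    rw [div_le_iff₀ hden]
    exact hub.trans (le_of_eq (by ring))
  have h2 : 1-η ≤ (tauBar d α t lam r).toReal / (C * h r) := by
    rw [le_div_iff₀ hden]
    exact (le_of_eq (by ring : (1-η)*(C*h r) = (1-η)*C*h r)).trans hlb
  have : |(tauBar d α t lam r).toReal / (C * h r) - 1| ≤ η := abs_le.2 ⟨by linarith, by linarith⟩
  exact lt_of_le_of_lt this hηε
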